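/- Comparison of exponents: let ψ : 𝔽[X]^m → {k^r : r ∈ ℤ} ∪ {0} be bounded by 1, non-negative, positive infinitely often. Define C(N,v;ψ) = #{q : ‖q‖_∞ ≤ N, ψ(q) ≥ ‖q‖_∞^{-v}}, γ(v;ψ) = sup{γ : limsup_N C(N,v;ψ)N^{-γ} > 0} when C(N,v;ψ) → ∞, δ(v;ψ) = (n + γ(v;ψ))/(v+1) in that case (0 otherwise), δ(ψ) = sup_{v≥0} δ(v;ψ), and η(ψ) = inf{η : Σ_q ‖q‖_∞^n(ψ(q)/‖q‖_∞)^η < ∞}. Then min{δ(ψ), n} ≥ min{η(ψ), n}. -/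

import Mathlib

open Polynomial MeasureTheory Filter Set
open scoped Classical

noncomputable section

namespace FFapprox

variable {F : Type*} [Field F] [Fintype F]

/-- The absolute value on `𝔽((X⁻¹))`, modelled as `LaurentSeries F` in the
variable `T = X⁻¹`: `|f| = k^(deg_X f) = k^(-order_T f)`. -/
def fabs (f : LaurentSeries F) : ℝ :=
  if f = 0 then 0 else (Fintype.card F : ℝ) ^ (-f.order)

lemma fabs_nonneg (f : LaurentSeries F) : 0 ≤ fabs f := by
  unfold fabs; split
  · exact le_refl 0
  · positivity

lemma one_le_cardF : (1 : ℝ) ≤ (Fintype.card F : ℝ) := by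
  exact_mod_cast Fintype.card_pos

lemma fabs_zero : fabs (0 : LaurentSeries F) = 0 := if_pos rfl

lemma fabs_neg (f : LaurentSeries F) : fabs (-f) = fabs f := by
  unfold fabs
  rw [HahnSeries.order_neg, neg_eq_zero]

lemma fabs_add_le (f g : LaurentSeries F) :
    fabs (f + g) ≤ max (fabs f) (fabs g) := by
  rcases eq_or_ne f 0 with rfl | hf
  · simp [fabs_zero, le_max_iff, le_refl]
  rcases eq_or_ne g 0 with rfl | hg
  · simp [fabs_zero, le_max_iff, le_refl]
  rcases eq_or_ne (f + g) 0 with hfg | hfg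
  · rw [hfg, fabs_zero]
    exact le_max_of_le_left (fabs_nonneg f)
  have horder := HahnSeries.min_order_le_order_add hfg
  unfold fabs
  rw [if_neg hf, if_neg hg, if_neg hfg, le_max_iff]
  rcases min_le_iff.mp (le_refl (min f.order g.order)) with h | h
  · rcases le_or_gt f.order g.order with hle | hlt
    · left
      refine zpow_le_zpow_right₀ one_le_cardF ?_
      simp only [neg_le_neg_iff]
      exact le_trans (by simp [min_eq_left hle]) horder
    · right
      refine zpow_le_zpow_right₀ one_le_cardF ?_
      simp only [neg_le_neg_iff]
      exact le_trans (by simp [min_eq_right hlt.le]) horder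
  · rcases le_or_gt f.order g.order with hle | hlt
    · left
      refine zpow_le_zpow_right₀ one_le_cardF ?_
      simp only [neg_le_neg_iff]
      exact le_trans (by simp [min_eq_left hle]) horder
    · right
      refine zpow_le_zpow_right₀ one_le_cardF ?_
      simp only [neg_le_neg_iff]
      exact le_trans (by simp [min_eq_right hlt.le]) horder

instance : MetricSpace (LaurentSeries F) where
  dist f g := fabs (f - g)
  dist_self f := by simp [fabs_zero]
  dist_comm f g := by
    have : g - f = -(f - g) := by ring
    try simp only []
    rw [this, fabs_neg]
  dist_triangle f g h := by
    have : f - h = (f - g) + (g - h) := by ring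
    try simp only []
    rw [this]
    refine le_trans (fabs_add_le _ _) ?_
    rw [max_le_iff]
    constructor
    · exact le_add_of_nonneg_right (fabs_nonneg _)
    · exact le_add_of_nonneg_left (fabs_nonneg _)
  eq_of_dist_eq_zero := by
    intro f g hfg
    by_contra hne
    have hsub : f - g ≠ 0 := sub_ne_zero.mpr hne
    try simp only [] at hfg
    unfold fabs at hfg
    rw [if_neg hsub] at hfg
    have : (0:ℝ) < (Fintype.card F : ℝ) ^ (-(f-g).order) := by positivity
    linarith

instance : MeasurableSpace (LaurentSeries F) := borel _

instance : BorelSpace (LaurentSeries F) := ⟨rfl⟩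

/-- The embedding of `𝔽[X]` into `𝔽((X⁻¹))`, sending `X` to `T⁻¹`. -/
def pe : Polynomial F →ₐ[F] LaurentSeries F :=
  Polynomial.aeval (HahnSeries.single (-1 : ℤ) (1 : F))

/-- `|q| = k^(deg q)` on polynomials. -/
def pabs (q : Polynomial F) : ℝ :=
  if q = 0 then 0 else (Fintype.card F : ℝ) ^ q.natDegree

/-- sup-norm of a polynomial vector. -/
def qnorm {m : ℕ} (q : Fin m → Polynomial F) : ℝ := ⨆ i, pabs (q i)

/-- sup-norm of a vector of Laurent series. -/
def vnorm {n : ℕ} (v : Fin n → LaurentSeries F) : ℝ := ⨆ i, fabs (v i)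

/-- sup-norm of a matrix. -/
def mnorm {m n : ℕ} (A : Fin m → Fin n → LaurentSeries F) : ℝ := ⨆ i, vnorm (A i)

/-- Distance of a vector to the nearest polynomial vector. -/
def pdist {n : ℕ} (v : Fin n → LaurentSeries F) : ℝ :=
  ⨅ p : Fin n → Polynomial F, vnorm (fun i => v i - pe (p i))

/-- matrix product `q A` of a polynomial row vector with a Laurent-series matrix. -/
def mulVec {m n : ℕ} (q : Fin m → Polynomial F) (A : Fin m → Fin n → LaurentSeries F) :
    Fin n → LaurentSeries F :=
  fun j => ∑ i, pe (q i) * A i j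

/-- The unit cube in the space of `m × n` matrices. -/
def U (F : Type*) [Field F] [Fintype F] (m n : ℕ) : Set (Fin m → Fin n → LaurentSeries F) :=
  {A | ∀ i j, fabs (A i j) < 1}

/-- The exponent of convergence `v(S)`. -/
def expConv {m : ℕ} (S : Set (Fin m → Polynomial F)) : ℝ :=
  sInf {v : ℝ | Summable fun q : S => qnorm (q : Fin m → Polynomial F) ^ (-v)}

/-- The set `W_S(m,n;ψ)`. -/
def WS {m n : ℕ} (S : Set (Fin m → Polynomial F))
    (ψ : (Fin m → Polynomial F) → ℝ) : Set (Fin m → Fin n → LaurentSeries F) :=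
  {A | {q ∈ S | pdist (mulVec q A) < ψ q}.Infinite}


open scoped ENNReal NNReal

/-- The polynomial Euler totient `Φ(q)`. -/
def Phi (q : Polynomial F) : ℕ :=
  Nat.card {q' : Polynomial F // pabs q' < pabs q ∧ q'.Monic ∧ IsCoprime q q'}

/-- The unit cube in `𝔽((X⁻¹))ⁿ`. -/
def U1 (F : Type*) [Field F] [Fintype F] (n : ℕ) : Set (Fin n → LaurentSeries F) :=
  {A | ∀ i, fabs (A i) < 1}

/-- `B(q,ε) = {A ∈ U : ‖qA‖ < ε}`. -/
def BallB {m n : ℕ} (q : Fin m → Polynomial F) (ε : ℝ) :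
    Set (Fin m → Fin n → LaurentSeries F) :=
  {A ∈ U F m n | pdist (mulVec q A) < ε}

/-- `B'(q,ε)` (one-dimensional case, with coprimality). -/
def BallB' {n : ℕ} (q : Polynomial F) (ε : ℝ) : Set (Fin n → LaurentSeries F) :=
  {A ∈ U1 F n | ∃ p : Fin n → Polynomial F, (∀ i, IsCoprime q (p i)) ∧
    vnorm (fun i => pe q * A i - pe (p i)) < ε}

/-- gcd of the coordinates of a polynomial vector. -/
def gcdv {m : ℕ} (q : Fin m → Polynomial F) : Polynomial F := Finset.univ.gcd q

/-- `B''(q,ε)` (higher-dimensional case, with coprimality to the gcd of coordinates). -/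
def BallB'' {m n : ℕ} (q : Fin m → Polynomial F) (ε : ℝ) :
    Set (Fin m → Fin n → LaurentSeries F) :=
  {A ∈ U F m n | ∃ p : Fin n → Polynomial F, (∀ j, IsCoprime (gcdv q) (p j)) ∧
    vnorm (fun j => mulVec q A j - pe (p j)) < ε}

/-- The resonant affine subspace `H(q,p) = {A ∈ U : qA = p}`. -/
def Hqp {m n : ℕ} (q : Fin m → Polynomial F) (p : Fin n → Polynomial F) :
    Set (Fin m → Fin n → LaurentSeries F) :=
  {A ∈ U F m n | mulVec q A = fun j => pe (p j)}

/-- The counting function `C(N;S)`. -/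
def CountS {m : ℕ} (S : Set (Fin m → Polynomial F)) (N : ℕ) : ℕ :=
  Nat.card {q : Fin m → Polynomial F // q ∈ S ∧ qnorm q ≤ N}

/-- The growth exponent `γ(S)`. -/
def gammaS {m : ℕ} (S : Set (Fin m → Polynomial F)) : ℝ :=
  sSup {γ : ℝ | 0 < Filter.atTop.limsup (fun N : ℕ => (CountS S N : ℝ≥0∞) * (N : ℝ≥0∞) ^ (-γ))}

/-- The exponent `η(ψ)`. -/
def etaExp {m : ℕ} (n : ℕ) (ψ : (Fin m → Polynomial F) → ℝ) : ℝ :=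
  sInf {η : ℝ | Summable (fun q : Fin m → Polynomial F => qnorm q ^ n * (ψ q / qnorm q) ^ η)}

/-- The exponent of convergence of `S ⊆ 𝔽[X]` (one-dimensional). -/
def expConv1 (S : Set (Polynomial F)) : ℝ :=
  sInf {v : ℝ | Summable fun q : S => pabs (q : Polynomial F) ^ (-v)}


/-- The counting function `C(N,v;ψ)`. -/
def Cpsi {m : ℕ} (ψ : (Fin m → Polynomial F) → ℝ) (v : ℝ) (N : ℕ) : ℕ :=
  Nat.card {q : Fin m → Polynomial F // qnorm q ≤ N ∧ qnorm q ^ (-v) ≤ ψ q}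

/-- The growth exponent `γ(v;ψ)`. -/
def gammaPsi {m : ℕ} (ψ : (Fin m → Polynomial F) → ℝ) (v : ℝ) : ℝ :=
  sSup {γ : ℝ | 0 < Filter.atTop.limsup
    (fun N : ℕ => (Cpsi ψ v N : ℝ≥0∞) * (N : ℝ≥0∞) ^ (-γ))}

/-- `δ(v;ψ)`. -/
def deltaPsiV {m : ℕ} (n : ℕ) (ψ : (Fin m → Polynomial F) → ℝ) (v : ℝ) : ℝ :=
  if Filter.Tendsto (fun N : ℕ => Cpsi ψ v N) Filter.atTop Filter.atTop then
    ((n : ℝ) + gammaPsi ψ v) / (v + 1)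
  else 0

/-- `δ(ψ) = sup_{v ≥ 0} δ(v;ψ)`. -/
def deltaPsi {m : ℕ} (n : ℕ) (ψ : (Fin m → Polynomial F) → ℝ) : ℝ :=
  sSup {d : ℝ | ∃ v : ℝ, 0 ≤ v ∧ d = deltaPsiV n ψ v}

lemma two_le_card : 2 ≤ Fintype.card F := Fintype.one_lt_card
lemma one_lt_cardR : (1:ℝ) < (Fintype.card F : ℝ) := by exact_mod_cast (two_le_card (F := F))
lemma cardR_pos : (0:ℝ) < (Fintype.card F : ℝ) := lt_trans one_pos one_lt_cardR
lemma pabs_nonneg' (p : Polynomial F) : 0 ≤ pabs p := by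
  unfold pabs; split
  · exact le_refl 0
  · positivity
lemma one_le_pabs {p : Polynomial F} (hp : p ≠ 0) : 1 ≤ pabs p := by
  unfold pabs; rw [if_neg hp]
  exact one_le_pow₀ (le_of_lt one_lt_cardR)

-- max degree
def Tdeg {m : ℕ} (q : Fin m → Polynomial F) : ℕ := Finset.univ.sup fun i => (q i).natDegree

variable {m : ℕ}

lemma qnorm_nonneg (hm : 0 < m) (q : Fin m → Polynomial F) : 0 ≤ qnorm q := by
  have : Nonempty (Fin m) := ⟨⟨0, hm⟩⟩
  refine le_trans (pabs_nonneg' (q (Classical.arbitrary _))) ?_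
  exact le_ciSup (Set.Finite.bddAbove (Set.finite_range (fun i => pabs (q i)))) _

lemma qnorm_le_iff (hm : 0 < m) {q : Fin m → Polynomial F} {C : ℝ} :
    qnorm q ≤ C ↔ ∀ i, pabs (q i) ≤ C := by
  have : Nonempty (Fin m) := ⟨⟨0, hm⟩⟩
  exact ciSup_le_iff (Set.Finite.bddAbove (Set.finite_range (fun i => pabs (q i))))

lemma pabs_le_qnorm (hm : 0 < m) (q : Fin m → Polynomial F) (i : Fin m) :
    pabs (q i) ≤ qnorm q := by
  have : Nonempty (Fin m) := ⟨⟨0, hm⟩⟩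
  exact le_ciSup (Set.Finite.bddAbove (Set.finite_range (fun i => pabs (q i)))) i

lemma qnorm_eq_pow (hm : 0 < m) {q : Fin m → Polynomial F} (hq : q ≠ 0) :
    qnorm q = (Fintype.card F : ℝ) ^ (Tdeg q) := by
  have : Nonempty (Fin m) := ⟨⟨0, hm⟩⟩
  obtain ⟨i0, hi0⟩ : ∃ i, q i ≠ 0 := by
    by_contra h; push_neg at h; exact hq (funext h)
  apply le_antisymm
  · rw [qnorm_le_iff hm]
    intro i
    unfold pabs; split
    · positivity
    · exact pow_le_pow_right₀ (le_of_lt one_lt_cardR)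
        (Finset.le_sup (f := fun i => (q i).natDegree) (Finset.mem_univ i))
  · obtain ⟨j, _, hj⟩ := Finset.exists_mem_eq_sup Finset.univ ⟨i0, Finset.mem_univ i0⟩
      (fun i => (q i).natDegree)
    rcases eq_or_ne (q j) 0 with hz | hz
    · -- then Tdeg q = 0, use i0
      have h0 : Tdeg q = 0 := by unfold Tdeg; rw [hj, hz]; simp
      have hd : (q i0).natDegree = 0 :=
        Nat.le_zero.mp (h0 ▸ Finset.le_sup (f := fun i => (q i).natDegree) (Finset.mem_univ i0))
      have : pabs (q i0) = (Fintype.card F : ℝ) ^ (Tdeg q) := by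
        unfold pabs; rw [if_neg hi0, hd, h0]
      rw [← this]; exact pabs_le_qnorm hm q i0
    · have : pabs (q j) = (Fintype.card F : ℝ) ^ (Tdeg q) := by
        unfold pabs; rw [if_neg hz]; unfold Tdeg; rw [hj]
      rw [← this]; exact pabs_le_qnorm hm q j

lemma qnorm_zero (hm : 0 < m) : qnorm (0 : Fin m → Polynomial F) = 0 := by
  have : Nonempty (Fin m) := ⟨⟨0, hm⟩⟩
  unfold qnorm
  have : ∀ i : Fin m, pabs ((0 : Fin m → Polynomial F) i) = 0 := by
    intro i
    show pabs 0 = 0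
    unfold pabs
    rw [if_pos rfl]
  simp only [this]
  exact ciSup_const

lemma one_le_qnorm (hm : 0 < m) {q : Fin m → Polynomial F} (hq : q ≠ 0) :
    1 ≤ qnorm q := by
  rw [qnorm_eq_pow hm hq]
  exact one_le_pow₀ (le_of_lt one_lt_cardR)

-- finiteness of balls
lemma finite_degLE (d : ℕ) : {p : Polynomial F | p.natDegree ≤ d}.Finite := by
  have hinj : Set.InjOn (fun p : Polynomial F => fun i : Fin (d+1) => p.coeff i)
      {p | p.natDegree ≤ d} := by
    intro p hp q hq h
    ext i
    rcases le_or_gt i d with hi | hi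
    · have := congrFun h ⟨i, by omega⟩
      simpa using this
    · rw [Polynomial.coeff_eq_zero_of_natDegree_lt (lt_of_le_of_lt hp hi),
        Polynomial.coeff_eq_zero_of_natDegree_lt (lt_of_le_of_lt hq hi)]
  exact Set.Finite.of_finite_image (Set.toFinite _) hinj

lemma pabs_ball_subset {N : ℕ} (hN : 1 ≤ N) :
    {p : Polynomial F | pabs p ≤ (N:ℝ)} ⊆
      {p : Polynomial F | p.natDegree ≤ Nat.log (Fintype.card F) N} := by
  intro p hp
  rcases eq_or_ne p 0 with rfl | hp0
  · simp
  · have h : (Fintype.card F) ^ p.natDegree ≤ N := by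
      have hple : pabs p ≤ (N:ℝ) := hp
      unfold pabs at hple; rw [if_neg hp0] at hple
      have : ((Fintype.card F ^ p.natDegree : ℕ) : ℝ) ≤ (N:ℝ) := by push_cast; exact hple
      exact_mod_cast this
    exact (Nat.le_log_iff_pow_le (by have := two_le_card (F:=F); omega) (by omega)).mpr h

lemma finite_pabs_ball (N : ℕ) : {p : Polynomial F | pabs p ≤ (N:ℝ)}.Finite := by
  rcases Nat.eq_zero_or_pos N with rfl | hN
  · apply Set.Finite.subset (Set.finite_singleton (0 : Polynomial F))
    intro p hp
    simp only [Set.mem_singleton_iff]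
    by_contra h
    have := one_le_pabs h
    simp only [Set.mem_setOf_eq, Nat.cast_zero] at hp
    linarith
  · exact Set.Finite.subset (finite_degLE _) (pabs_ball_subset hN)

lemma ncard_pabs_ball {N : ℕ} (hN : 1 ≤ N) :
    ({p : Polynomial F | pabs p ≤ (N:ℝ)}).ncard ≤ Fintype.card F * N := by
  classical
  set d := Nat.log (Fintype.card F) N with hd
  have h1 : ({p : Polynomial F | pabs p ≤ (N:ℝ)}).ncard ≤
      ({p : Polynomial F | p.natDegree ≤ d}).ncard :=
    Set.ncard_le_ncard (pabs_ball_subset hN) (finite_degLE d)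
  have hinj : Set.InjOn (fun p : Polynomial F => fun i : Fin (d+1) => p.coeff i)
      {p | p.natDegree ≤ d} := by
    intro p hp q hq h
    ext i
    rcases le_or_gt i d with hi | hi
    · have := congrFun h ⟨i, by omega⟩
      simpa using this
    · rw [Polynomial.coeff_eq_zero_of_natDegree_lt (lt_of_le_of_lt hp hi),
        Polynomial.coeff_eq_zero_of_natDegree_lt (lt_of_le_of_lt hq hi)]
  have h2 : ({p : Polynomial F | p.natDegree ≤ d}).ncard ≤ Fintype.card F ^ (d+1) := by
    calc ({p : Polynomial F | p.natDegree ≤ d}).ncard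
        = Nat.card {p : Polynomial F | p.natDegree ≤ d} := (Nat.card_coe_set_eq _).symm
      _ ≤ Nat.card (Fin (d+1) → F) := by
          refine Nat.card_le_card_of_injective
            (fun p : {p : Polynomial F // p.natDegree ≤ d} =>
              (fun i : Fin (d+1) => (p : Polynomial F).coeff i)) ?_
          intro ⟨p, hp⟩ ⟨q, hq⟩ h
          exact Subtype.ext (hinj hp hq (by simpa using h))
      _ = Fintype.card F ^ (d+1) := by
          rw [Nat.card_pi]; simp [Nat.card_eq_fintype_card]
  have h3 : Fintype.card F ^ (d+1) ≤ Fintype.card F * N := by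
    rw [pow_succ, mul_comm]
    exact Nat.mul_le_mul_left _ (Nat.pow_log_le_self _ (by omega))
  omega

lemma finite_qnorm_ball (hm : 0 < m) (N : ℕ) :
    {q : Fin m → Polynomial F | qnorm q ≤ (N:ℝ)}.Finite := by
  apply Set.Finite.subset (Set.Finite.pi (fun _ : Fin m => finite_pabs_ball (F:=F) N))
  intro q hq
  rw [Set.mem_pi]
  exact fun i _ => (qnorm_le_iff hm).mp hq i

lemma ncard_qnorm_ball (hm : 0 < m) {N : ℕ} (hN : 1 ≤ N) :
    ({q : Fin m → Polynomial F | qnorm q ≤ (N:ℝ)}).ncard ≤ (Fintype.card F * N) ^ m := by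
  classical
  have hsub : {q : Fin m → Polynomial F | qnorm q ≤ (N:ℝ)} ⊆
      Set.pi Set.univ (fun _ : Fin m => {p : Polynomial F | pabs p ≤ (N:ℝ)}) := by
    intro q hq
    rw [Set.mem_pi]
    exact fun i _ => (qnorm_le_iff hm).mp hq i
  have h1 := Set.ncard_le_ncard hsub (Set.Finite.pi (fun _ => finite_pabs_ball N))
  have h2 : (Set.pi Set.univ (fun _ : Fin m => {p : Polynomial F | pabs p ≤ (N:ℝ)})).ncard
      ≤ (Fintype.card F * N) ^ m := by
    rw [← Nat.card_coe_set_eq]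
    calc Nat.card (Set.pi Set.univ (fun _ : Fin m => {p : Polynomial F | pabs p ≤ (N:ℝ)}))
        ≤ Nat.card (Fin m → {p : Polynomial F // pabs p ≤ (N:ℝ)}) := by
          haveI : Finite {p : Polynomial F // pabs p ≤ (N:ℝ)} :=
            (finite_pabs_ball N).to_subtype
          refine Nat.card_le_card_of_injective
            (fun q => fun i => (⟨(q : Fin m → Polynomial F) i, by
              have h := q.2; rw [Set.mem_pi] at h
              exact h i (Set.mem_univ i)⟩ : {p : Polynomial F // pabs p ≤ (N:ℝ)})) ?_
          intro q r h
          apply Subtype.ext; funext i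
          exact congrArg Subtype.val (congrFun h i)
      _ = Nat.card {p : Polynomial F // pabs p ≤ (N:ℝ)} ^ m := by
          rw [Nat.card_pi]; simp
      _ ≤ (Fintype.card F * N) ^ m := by
          apply Nat.pow_le_pow_left
          exact le_trans (le_of_eq (Nat.card_coe_set_eq _)) (ncard_pabs_ball hN)
  omega


variable (ψ : (Fin m → Polynomial F) → ℝ)

/-- The set counted by `Cpsi`. -/
def CpsiSet (v : ℝ) (N : ℕ) : Set (Fin m → Polynomial F) :=
  {q | qnorm q ≤ (N:ℝ) ∧ qnorm q ^ (-v) ≤ ψ q}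

lemma CpsiSet_finite (hm : 0 < m) (v : ℝ) (N : ℕ) : (CpsiSet ψ v N).Finite :=
  Set.Finite.subset (finite_qnorm_ball hm N) (fun q hq => hq.1)

lemma Cpsi_eq_ncard (v : ℝ) (N : ℕ) : Cpsi ψ v N = (CpsiSet ψ v N).ncard :=
  Nat.card_coe_set_eq _

lemma Cpsi_le_pow (hm : 0 < m) (v : ℝ) {N : ℕ} (hN : 1 ≤ N) :
    Cpsi ψ v N ≤ (Fintype.card F * N) ^ m := by
  rw [Cpsi_eq_ncard]
  exact le_trans (Set.ncard_le_ncard (fun q hq => hq.1) (finite_qnorm_ball hm N))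
    (ncard_qnorm_ball hm hN)

lemma Cpsi_mono (hm : 0 < m) (v : ℝ) : Monotone (fun N => Cpsi ψ v N) := by
  intro N N' h
  simp only [Cpsi_eq_ncard]
  apply Set.ncard_le_ncard _ (CpsiSet_finite ψ hm v N')
  intro q hq
  exact ⟨le_trans hq.1 (by exact_mod_cast h), hq.2⟩

/-- if `Cpsi` does not tend to infinity, the full set `A_v` is finite -/
lemma Av_finite_of_not_tendsto (hm : 0 < m) {v : ℝ}
    (h : ¬ Filter.Tendsto (fun N : ℕ => Cpsi ψ v N) Filter.atTop Filter.atTop) :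
    {q : Fin m → Polynomial F | qnorm q ^ (-v) ≤ ψ q}.Finite := by
  by_contra hinf
  apply h
  apply Monotone.tendsto_atTop_atTop (Cpsi_mono ψ hm v)
  intro B
  have hinf' : {q : Fin m → Polynomial F | qnorm q ^ (-v) ≤ ψ q}.Infinite := hinf
  obtain ⟨u, hu, hcard⟩ := hinf'.exists_subset_card_eq B
  set N := u.sup (fun q => ⌈qnorm q⌉₊) with hN
  refine ⟨N, ?_⟩
  have hsub : (u : Set (Fin m → Polynomial F)) ⊆ CpsiSet ψ v N := by
    intro q hq
    refine ⟨?_, hu hq⟩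
    have h1 : qnorm q ≤ (⌈qnorm q⌉₊ : ℝ) := Nat.le_ceil _
    have h2 : (⌈qnorm q⌉₊ : ℝ) ≤ (N : ℝ) := by
      exact_mod_cast Finset.le_sup (f := fun q => ⌈qnorm q⌉₊) hq
    linarith
  calc B = u.card := hcard.symm
    _ = ((u : Set (Fin m → Polynomial F))).ncard := (Set.ncard_coe_finset u).symm
    _ ≤ (CpsiSet ψ v N).ncard := Set.ncard_le_ncard hsub (CpsiSet_finite ψ hm v N)
    _ = Cpsi ψ v N := (Cpsi_eq_ncard ψ v N).symm

lemma rpow_ne_top' {x : ℝ≥0∞} (h0 : x ≠ 0) (ht : x ≠ ⊤) (y : ℝ) : x ^ y ≠ ⊤ := by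
  intro h
  rcases ENNReal.rpow_eq_top_iff.mp h with ⟨h1,_⟩ | ⟨h1,_⟩
  · exact h0 h1
  · exact ht h1

lemma limsup_Cpsi_zero (hm : 0 < m) (v : ℝ) {γ : ℝ} (hγ : (m:ℝ) < γ) :
    Filter.atTop.limsup (fun N : ℕ => (Cpsi ψ v N : ℝ≥0∞) * (N : ℝ≥0∞) ^ (-γ)) = 0 := by
  apply Tendsto.limsup_eq
  have hK : (0:ℝ) < (Fintype.card F : ℝ) ^ m := by positivity
  have hg : Tendsto (fun N : ℕ => ENNReal.ofReal
      ((Fintype.card F : ℝ) ^ m * (N:ℝ) ^ ((m:ℝ) - γ))) atTop (nhds 0) := by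
    have h1 : Tendsto (fun x : ℝ => x ^ (-(γ - (m:ℝ)))) atTop (nhds 0) :=
      tendsto_rpow_neg_atTop (by linarith)
    have h2 : Tendsto (fun N : ℕ => ((N:ℝ)) ^ ((m:ℝ) - γ)) atTop (nhds 0) := by
      have := h1.comp (tendsto_natCast_atTop_atTop (R := ℝ))
      simpa [neg_sub, Function.comp_def] using this
    have h3 := h2.const_mul ((Fintype.card F : ℝ) ^ m)
    rw [mul_zero] at h3
    have := ENNReal.tendsto_ofReal h3
    simpa using this
  refine tendsto_of_tendsto_of_tendsto_of_le_of_le' tendsto_const_nhds hg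
    (Filter.Eventually.of_forall (fun N => zero_le)) ?_
  filter_upwards [Filter.eventually_ge_atTop 1] with N hN
  have hNpos : (0:ℝ) < (N:ℝ) := by exact_mod_cast hN
  have hcast : (N : ℝ≥0∞) = ENNReal.ofReal (N:ℝ) := by
    rw [ENNReal.ofReal_natCast]
  rw [hcast, ENNReal.ofReal_rpow_of_pos hNpos]
  have hCc : (Cpsi ψ v N : ℝ≥0∞) = ENNReal.ofReal (Cpsi ψ v N : ℝ) := by
    rw [ENNReal.ofReal_natCast]
  rw [hCc, ← ENNReal.ofReal_mul (by positivity)]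
  apply ENNReal.ofReal_le_ofReal
  have hC : (Cpsi ψ v N : ℝ) ≤ ((Fintype.card F : ℝ) * N) ^ m := by
    have := Cpsi_le_pow ψ hm v hN
    calc (Cpsi ψ v N : ℝ) ≤ ((Fintype.card F * N : ℕ) ^ m : ℕ) := by exact_mod_cast this
      _ = ((Fintype.card F : ℝ) * N) ^ m := by push_cast; ring
  have hrp : (0:ℝ) ≤ (N:ℝ) ^ (-γ) := Real.rpow_nonneg (le_of_lt hNpos) _
  calc (Cpsi ψ v N : ℝ) * (N:ℝ) ^ (-γ) ≤ ((Fintype.card F : ℝ) * N) ^ m * (N:ℝ) ^ (-γ) :=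
        mul_le_mul_of_nonneg_right hC hrp
    _ = (Fintype.card F : ℝ) ^ m * ((N:ℝ) ^ (m:ℕ) * (N:ℝ) ^ (-γ)) := by ring
    _ = (Fintype.card F : ℝ) ^ m * (N:ℝ) ^ ((m:ℝ) - γ) := by
        rw [← Real.rpow_natCast (N:ℝ) m, ← Real.rpow_add hNpos, sub_eq_add_neg]

lemma gammaPsi_mem_le (hm : 0 < m) (v : ℝ) {γ : ℝ}
    (hγ : 0 < Filter.atTop.limsup (fun N : ℕ => (Cpsi ψ v N : ℝ≥0∞) * (N : ℝ≥0∞) ^ (-γ))) :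
    γ ≤ (m:ℝ) := by
  by_contra h
  rw [limsup_Cpsi_zero ψ hm v (by linarith)] at hγ
  exact lt_irrefl 0 hγ

lemma gammaPsi_le (hm : 0 < m) (v : ℝ) : gammaPsi ψ v ≤ (m:ℝ) :=
  Real.sSup_le (fun γ hγ => gammaPsi_mem_le ψ hm v hγ) (by positivity)

lemma bddAbove_GammaSet (hm : 0 < m) (v : ℝ) :
    BddAbove {γ : ℝ | 0 < Filter.atTop.limsup
      (fun N : ℕ => (Cpsi ψ v N : ℝ≥0∞) * (N : ℝ≥0∞) ^ (-γ))} :=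
  ⟨(m:ℝ), fun γ hγ => gammaPsi_mem_le ψ hm v hγ⟩

lemma gammaPsi_nonneg_of_tendsto {v : ℝ} (hm : 0 < m)
    (h : Filter.Tendsto (fun N : ℕ => Cpsi ψ v N) Filter.atTop Filter.atTop) :
    0 ≤ gammaPsi ψ v := by
  apply le_csSup (bddAbove_GammaSet ψ hm v)
  show 0 < Filter.atTop.limsup (fun N : ℕ => (Cpsi ψ v N : ℝ≥0∞) * (N : ℝ≥0∞) ^ (-(0:ℝ)))
  have hev : ∀ᶠ N : ℕ in atTop, (1:ℝ≥0∞) ≤ (Cpsi ψ v N : ℝ≥0∞) * (N : ℝ≥0∞) ^ (-(0:ℝ)) := by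
    filter_upwards [h.eventually_ge_atTop 1] with N hN
    rw [neg_zero, ENNReal.rpow_zero, mul_one]
    exact_mod_cast hN
  have := Filter.le_limsup_of_frequently_le hev.frequently
    ⟨⊤, Filter.Eventually.of_forall (fun _ => le_top)⟩
  exact lt_of_lt_of_le zero_lt_one this

lemma eventually_Cpsi_le (hm : 0 < m) {v γ' : ℝ} (hγ' : gammaPsi ψ v < γ') :
    ∀ᶠ N : ℕ in atTop, (Cpsi ψ v N : ℝ) ≤ (N:ℝ) ^ γ' := by
  have hnotmem : ¬ (0 < Filter.atTop.limsup
      (fun N : ℕ => (Cpsi ψ v N : ℝ≥0∞) * (N : ℝ≥0∞) ^ (-γ'))) := by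
    intro hpos
    exact absurd (le_csSup (bddAbove_GammaSet ψ hm v) hpos) (not_le.mpr hγ')
  have hzero : Filter.atTop.limsup
      (fun N : ℕ => (Cpsi ψ v N : ℝ≥0∞) * (N : ℝ≥0∞) ^ (-γ')) = 0 :=
    le_antisymm (not_lt.mp hnotmem) zero_le
  have hev : ∀ᶠ N : ℕ in atTop,
      (Cpsi ψ v N : ℝ≥0∞) * (N : ℝ≥0∞) ^ (-γ') < 1 :=
    Filter.eventually_lt_of_limsup_lt (by rw [hzero]; exact zero_lt_one)
  filter_upwards [hev, Filter.eventually_ge_atTop 1] with N hN hN1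
  have hNne : (N : ℝ≥0∞) ≠ 0 := by
    exact_mod_cast Nat.cast_ne_zero.mpr (show N ≠ 0 by omega)
  have hNnt : (N : ℝ≥0∞) ≠ ⊤ := ENNReal.natCast_ne_top N
  have hb0 : (N : ℝ≥0∞) ^ γ' ≠ 0 := by
    intro h
    rcases ENNReal.rpow_eq_zero_iff.mp h with ⟨h1,_⟩ | ⟨h1,_⟩
    · exact hNne h1
    · exact hNnt h1
  have hbt : (N : ℝ≥0∞) ^ γ' ≠ ⊤ := rpow_ne_top' hNne hNnt γ'
  have hlt : (Cpsi ψ v N : ℝ≥0∞) < (N : ℝ≥0∞) ^ γ' := by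
    rw [ENNReal.rpow_neg, ← div_eq_mul_inv] at hN
    have := (ENNReal.div_lt_iff (Or.inl hb0) (Or.inl hbt)).mp hN
    rwa [one_mul] at this
  have := ENNReal.toReal_mono hbt (le_of_lt hlt)
  rw [← ENNReal.toReal_rpow] at this
  simpa using this

variable (n : ℕ)

lemma deltaPsiV_le_bound (hm : 0 < m) {v : ℝ} (hv : 0 ≤ v) :
    deltaPsiV n ψ v ≤ (n:ℝ) + m := by
  unfold deltaPsiV
  split
  case isTrue h =>
    have h0 : 0 ≤ gammaPsi ψ v := gammaPsi_nonneg_of_tendsto ψ hm h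
    have h1 : gammaPsi ψ v ≤ (m:ℝ) := gammaPsi_le ψ hm v
    calc ((n:ℝ) + gammaPsi ψ v) / (v + 1) ≤ ((n:ℝ) + gammaPsi ψ v) :=
          div_le_self (by positivity) (by linarith)
      _ ≤ (n:ℝ) + m := by linarith
  case isFalse => positivity

lemma bddAbove_deltaSet (hm : 0 < m) :
    BddAbove {d : ℝ | ∃ v : ℝ, 0 ≤ v ∧ d = deltaPsiV n ψ v} := by
  refine ⟨(n:ℝ) + m, ?_⟩
  rintro d ⟨v, hv, rfl⟩
  exact deltaPsiV_le_bound ψ n hm hv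

lemma deltaPsiV_le_deltaPsi (hm : 0 < m) {v : ℝ} (hv : 0 ≤ v) :
    deltaPsiV n ψ v ≤ deltaPsi n ψ :=
  le_csSup (bddAbove_deltaSet ψ n hm) ⟨v, hv, rfl⟩

lemma deltaPsiV_nonneg (hm : 0 < m) {v : ℝ} (hv : 0 ≤ v) : 0 ≤ deltaPsiV n ψ v := by
  unfold deltaPsiV
  split
  case isTrue h =>
    have h0 : 0 ≤ gammaPsi ψ v := gammaPsi_nonneg_of_tendsto ψ hm h
    exact div_nonneg (by positivity) (by linarith)
  case isFalse => exact le_refl 0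

lemma deltaPsi_nonneg (hm : 0 < m) : 0 ≤ deltaPsi n ψ :=
  le_trans (deltaPsiV_nonneg ψ n hm (le_refl 0)) (deltaPsiV_le_deltaPsi ψ n hm (le_refl 0))

lemma summable_indicator_of_finite {α : Type*} {S : Set α} (hS : S.Finite) (f : α → ℝ) :
    Summable (S.indicator f) := by
  classical
  apply summable_of_ne_finset_zero (s := hS.toFinset)
  intro q hq
  exact Set.indicator_of_notMem (fun h => hq (hS.mem_toFinset.mpr h)) f

lemma summable_indicator_of_counts {α : Type*} {f : α → ℝ} (hf : ∀ q, 0 ≤ f q)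
    {S : Set α} (T : α → ℕ) {b : ℕ → ℝ} (hb : ∀ t, 0 ≤ b t) {cnt : ℕ → ℕ}
    (hfb : ∀ q ∈ S, f q ≤ b (T q))
    (hcnt : ∀ t : ℕ, ∀ u : Finset α, (∀ q ∈ u, q ∈ S ∧ T q = t) → u.card ≤ cnt t)
    (hsum : Summable (fun t => (cnt t : ℝ) * b t)) :
    Summable (S.indicator f) := by
  classical
  apply summable_of_sum_le (c := ∑' t, (cnt t : ℝ) * b t)
    (fun q => Set.indicator_nonneg (fun x _ => hf x) q)
  intro u
  have h1 : ∑ q ∈ u, S.indicator f q = ∑ q ∈ u.filter (· ∈ S), f q := by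
    simpa using Finset.sum_indicator_eq_sum_filter u (fun _ => f) (fun _ => S) id
  rw [h1]
  set u' := u.filter (· ∈ S) with hu'
  have hmaps : ∀ q ∈ u', T q ∈ u'.image T := fun q hq => Finset.mem_image_of_mem T hq
  rw [← Finset.sum_fiberwise_of_maps_to hmaps f]
  have h2 : ∀ t ∈ u'.image T, ∑ q ∈ u'.filter (fun q => T q = t), f q ≤ (cnt t : ℝ) * b t := by
    intro t _
    have hle : ∑ q ∈ u'.filter (fun q => T q = t), f q ≤
        (u'.filter (fun q => T q = t)).card • b t := by
      apply Finset.sum_le_card_nsmul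
      intro q hq
      rw [Finset.mem_filter] at hq
      have hqS : q ∈ S := (Finset.mem_filter.mp hq.1).2
      rw [← hq.2]
      exact hfb q hqS
    have hcard : (u'.filter (fun q => T q = t)).card ≤ cnt t := by
      apply hcnt t
      intro q hq
      rw [Finset.mem_filter] at hq
      exact ⟨(Finset.mem_filter.mp hq.1).2, hq.2⟩
    rw [nsmul_eq_mul] at hle
    calc ∑ q ∈ u'.filter (fun q => T q = t), f q
        ≤ ((u'.filter (fun q => T q = t)).card : ℝ) * b t := hle
      _ ≤ (cnt t : ℝ) * b t := by
          apply mul_le_mul_of_nonneg_right _ (hb t)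
          exact_mod_cast hcard
  calc ∑ t ∈ u'.image T, ∑ q ∈ u'.filter (fun q => T q = t), f q
      ≤ ∑ t ∈ u'.image T, (cnt t : ℝ) * b t := Finset.sum_le_sum h2
    _ ≤ ∑' t, (cnt t : ℝ) * b t := by
        apply Summable.sum_le_tsum _ (fun t _ => mul_nonneg (Nat.cast_nonneg _) (hb t)) hsum

lemma psi_rep (hval : ∀ q, ψ q = 0 ∨ ∃ r : ℤ, ψ q = (Fintype.card F : ℝ) ^ r)
    (hle1 : ∀ q, ψ q ≤ 1) :
    ∀ q, ∃ s : ℕ, 0 < ψ q → ψ q = (Fintype.card F : ℝ) ^ (-(s:ℝ)) := by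
  intro q
  rcases hval q with h0 | ⟨r, hr⟩
  · exact ⟨0, fun hq => absurd hq (by rw [h0]; exact lt_irrefl 0)⟩
  · refine ⟨(-r).toNat, fun hq => ?_⟩
    have hrle : r ≤ 0 := by
      by_contra hpos
      push_neg at hpos
      have h1 : (1:ℝ) < (Fintype.card F : ℝ) ^ r := one_lt_zpow₀ one_lt_cardR (by omega)
      have := hle1 q
      rw [hr] at this
      linarith
    have htoNat : (((-r).toNat : ℤ) : ℝ) = -(r:ℝ) := by
      rw [Int.toNat_of_nonneg (by omega)]; push_cast; ring
    rw [hr, ← Real.rpow_intCast (Fintype.card F : ℝ) r]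
    congr 1
    have : (((-r).toNat : ℕ) : ℝ) = (((-r).toNat : ℤ) : ℝ) := by push_cast; ring
    rw [this, htoNat, neg_neg]

lemma key_ineq {η₀ η₁ c ε : ℝ} (n : ℕ) (hc : c = (η₀ - η₁)/2) (hεη₁ : ε * η₁ = c)
    (hη₁ : 0 < η₁) (hη₁η₀ : η₁ < η₀) (j : ℕ) :
    (η₁ * (((j:ℝ)+1) * ε + 1) - (n:ℝ)) + ((n:ℝ) - (1 + (j:ℝ) * ε) * η₀) ≤ -c := by
  have hcpos : 0 < c := by rw [hc]; linarith
  have hεpos : 0 < ε := by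
    rcases lt_trichotomy ε 0 with h | h | h
    · nlinarith
    · exfalso; rw [h] at hεη₁; nlinarith
    · exact h
  have hjε : 0 ≤ (j:ℝ) * ε := mul_nonneg (Nat.cast_nonneg j) (le_of_lt hεpos)
  have hprod : (j:ℝ) * ε * (η₁ - η₀) ≤ 0 :=
    mul_nonpos_of_nonneg_of_nonpos hjε (by linarith)
  nlinarith [hprod]

lemma summable_high (m n : ℕ) {η₀ V : ℝ} (hη₀ : 0 < η₀)
    (hVη : V * η₀ = (m:ℝ) + (n:ℝ) + 1) :
    Summable (fun t : ℕ => (((Fintype.card F * Fintype.card F ^ t) ^ m : ℕ):ℝ) *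
      (Fintype.card F : ℝ) ^ ((t:ℝ) * ((n:ℝ) - (1 + V) * η₀))) := by
  have hK1 : (1:ℝ) < (Fintype.card F : ℝ) := one_lt_cardR
  have hKpos : (0:ℝ) < (Fintype.card F : ℝ) := cardR_pos
  set K := (Fintype.card F : ℝ) with hKdef
  have hgeo : Summable (fun t : ℕ => K ^ m * (K⁻¹) ^ t) :=
    (summable_geometric_of_lt_one (by positivity) (inv_lt_one_of_one_lt₀ hK1)).mul_left _
  refine Summable.of_nonneg_of_le
    (fun t => mul_nonneg (Nat.cast_nonneg _) (Real.rpow_nonneg (le_of_lt hKpos) _))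
    (fun t => ?_) hgeo
  have hterm : ((((Fintype.card F * Fintype.card F ^ t) ^ m : ℕ)):ℝ) *
      K ^ ((t:ℝ) * ((n:ℝ) - (1 + V) * η₀)) =
      K ^ m * K ^ (((t * m : ℕ):ℝ) + (t:ℝ) * ((n:ℝ) - (1 + V) * η₀)) := by
    push_cast
    rw [mul_pow, ← pow_mul, Real.rpow_add hKpos, ← Real.rpow_natCast K (t * m)]
    push_cast
    ring
  rw [hterm]
  have hsub : (n:ℝ) - (1 + V) * η₀ = -1 - η₀ - (m:ℝ) := by
    have h' : (1 + V) * η₀ = η₀ + ((m:ℝ) + n + 1) := by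
      rw [add_mul, one_mul, hVη]
    linarith
  have hexp : ((t * m : ℕ):ℝ) + (t:ℝ) * ((n:ℝ) - (1 + V) * η₀) ≤ -(t:ℝ) := by
    rw [hsub]
    push_cast
    nlinarith [mul_nonneg (Nat.cast_nonneg (α := ℝ) t) (le_of_lt hη₀)]
  have h1 : K ^ (((t * m : ℕ):ℝ) + (t:ℝ) * ((n:ℝ) - (1 + V) * η₀)) ≤ K ^ (-(t:ℝ)) :=
    Real.rpow_le_rpow_of_exponent_le (le_of_lt hK1) hexp
  have h2 : K ^ (-(t:ℝ)) = (K⁻¹) ^ t := by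
    rw [Real.rpow_neg (le_of_lt hKpos), Real.rpow_natCast, inv_pow]
  rw [h2] at h1
  exact mul_le_mul_of_nonneg_left h1 (by positivity)

lemma summable_cnt (v : ℝ) {γ' θ c : ℝ} (hc : 0 < c)
    {N₁ : ℕ} (hN₁ : ∀ N : ℕ, N₁ ≤ N → (Cpsi ψ v N : ℝ) ≤ (N:ℝ) ^ γ')
    (hkey : γ' + θ ≤ -c) :
    Summable (fun t : ℕ => (Cpsi ψ v (Fintype.card F ^ t) : ℝ) *
      (Fintype.card F : ℝ) ^ ((t:ℝ) * θ)) := by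
  have hK1 : (1:ℝ) < (Fintype.card F : ℝ) := one_lt_cardR
  have hKpos : (0:ℝ) < (Fintype.card F : ℝ) := cardR_pos
  set K := (Fintype.card F : ℝ) with hKdef
  rw [← summable_nat_add_iff N₁]
  set r := K ^ (-c) with hrdef
  have hr0 : 0 ≤ r := Real.rpow_nonneg (le_of_lt hKpos) _
  have hr1 : r < 1 := Real.rpow_lt_one_of_one_lt_of_neg hK1 (by linarith)
  have hgeo : Summable (fun t : ℕ => r ^ (t + N₁)) :=
    (summable_nat_add_iff N₁).mpr (summable_geometric_of_lt_one hr0 hr1)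
  refine Summable.of_nonneg_of_le
    (fun t => mul_nonneg (Nat.cast_nonneg _) (Real.rpow_nonneg (le_of_lt hKpos) _))
    (fun t => ?_) hgeo
  set t' := t + N₁ with ht'def
  have hbig : N₁ ≤ Fintype.card F ^ t' := by
    have h1 : t' < 2 ^ t' := Nat.lt_two_pow_self
    have h2 : 2 ^ t' ≤ Fintype.card F ^ t' :=
      Nat.pow_le_pow_left (two_le_card) t'
    omega
  have hC : (Cpsi ψ v (Fintype.card F ^ t') : ℝ) ≤ ((Fintype.card F ^ t' : ℕ):ℝ) ^ γ' :=
    hN₁ _ hbig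
  have hcast : ((Fintype.card F ^ t' : ℕ):ℝ) ^ γ' = K ^ ((t':ℝ) * γ') := by
    push_cast
    rw [← Real.rpow_natCast K t', ← Real.rpow_mul (le_of_lt hKpos)]
  calc (Cpsi ψ v (Fintype.card F ^ t') : ℝ) * K ^ ((t':ℝ) * θ)
      ≤ K ^ ((t':ℝ) * γ') * K ^ ((t':ℝ) * θ) := by
        apply mul_le_mul_of_nonneg_right _ (Real.rpow_nonneg (le_of_lt hKpos) _)
        rw [← hcast]; exact hC
    _ = K ^ ((t':ℝ) * (γ' + θ)) := by
        rw [← Real.rpow_add hKpos]; congr 1; ring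
    _ ≤ K ^ ((t':ℝ) * (-c)) := by
        apply Real.rpow_le_rpow_of_exponent_le (le_of_lt hK1)
        apply mul_le_mul_of_nonneg_left hkey (Nat.cast_nonneg t')
    _ = r ^ t' := by
        rw [hrdef, ← Real.rpow_natCast (K ^ (-c)) t', ← Real.rpow_mul (le_of_lt hKpos)]
        congr 1; ring

theorem eta_delta_aux (hm : 0 < m) (hn : 0 < n)
    (hval : ∀ q, ψ q = 0 ∨ ∃ r : ℤ, ψ q = (Fintype.card F : ℝ) ^ r)
    (hnn : ∀ q, 0 ≤ ψ q) (hle1 : ∀ q, ψ q ≤ 1)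
    (hinfpos : {q : Fin m → Polynomial F | 0 < ψ q}.Infinite) :
    min (sInf {η : ℝ | Summable (fun q : Fin m → Polynomial F =>
        qnorm q ^ n * (ψ q / qnorm q) ^ η)}) (n : ℝ) ≤ min (deltaPsi n ψ) (n : ℝ) := by
  classical
  have hK1 : (1:ℝ) < (Fintype.card F : ℝ) := one_lt_cardR
  have hKpos : (0:ℝ) < (Fintype.card F : ℝ) := cardR_pos
  set K := (Fintype.card F : ℝ) with hKdef
  set eE := sInf {η : ℝ | Summable (fun q : Fin m → Polynomial F =>
      qnorm q ^ n * (ψ q / qnorm q) ^ η)} with hEdef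
  set D := deltaPsi n ψ with hDdef
  have hD0 : 0 ≤ D := deltaPsi_nonneg ψ n hm
  rcases le_or_gt (min eE (n:ℝ)) (min D (n:ℝ)) with hgoal | h
  · exact hgoal
  exfalso
  have hDn : D < (n:ℝ) := by
    by_contra hc
    push_neg at hc
    rw [min_eq_right hc] at h
    exact absurd (min_le_right eE (n:ℝ)) (not_le.mpr h)
  rw [min_eq_left (le_of_lt hDn)] at h
  set η₀ := (D + min eE (n:ℝ)) / 2 with hη₀def
  have hDη₀ : D < η₀ := by
    have := h; simp only [hη₀def]; linarith
  have hη₀eta : η₀ < eE := by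
    have h1 : η₀ < min eE (n:ℝ) := by simp only [hη₀def]; linarith
    exact lt_of_lt_of_le h1 (min_le_left _ _)
  have hη₀pos : 0 < η₀ := lt_of_le_of_lt hD0 hDη₀
  set f := fun q : Fin m → Polynomial F => qnorm q ^ n * (ψ q / qnorm q) ^ η₀ with hfdef
  have hfnn : ∀ q, 0 ≤ f q := fun q => mul_nonneg (pow_nonneg (qnorm_nonneg hm q) n)
    (Real.rpow_nonneg (div_nonneg (hnn q) (qnorm_nonneg hm q)) _)
  -- Step 1 : f is not summable
  have hnotsum : ¬ Summable f := by
    intro hsum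
    have hbdd : BddBelow {η : ℝ | Summable (fun q : Fin m → Polynomial F =>
        qnorm q ^ n * (ψ q / qnorm q) ^ η)} := by
      refine ⟨0, fun η hη => ?_⟩
      by_contra hneg
      push_neg at hneg
      have hG : ({q : Fin m → Polynomial F | 0 < ψ q} \ {0}).Infinite :=
        hinfpos.diff (Set.finite_singleton 0)
      have hone : ∀ q ∈ ({q : Fin m → Polynomial F | 0 < ψ q} \ {0}),
          1 ≤ qnorm q ^ n * (ψ q / qnorm q) ^ η := by
        rintro q ⟨hψq, hq0⟩
        have hq0' : q ≠ 0 := hq0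
        have h1 : 1 ≤ qnorm q := one_le_qnorm hm hq0'
        have hr1 : ψ q / qnorm q ≤ 1 :=
          div_le_one_of_le₀ (le_trans (hle1 q) h1) (by linarith)
        have hr0 : 0 < ψ q / qnorm q := div_pos hψq (by linarith)
        have h2 := Real.one_le_rpow_of_pos_of_le_one_of_nonpos hr0 hr1 (le_of_lt hneg)
        have hq1 : (1:ℝ) ≤ qnorm q ^ n := one_le_pow₀ h1
        nlinarith
      have hfin : {q : Fin m → Polynomial F |
          ¬ (qnorm q ^ n * (ψ q / qnorm q) ^ η < 1)}.Finite := by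
        have hev := hη.tendsto_cofinite_zero.eventually (gt_mem_nhds one_pos)
        exact Filter.eventually_cofinite.mp hev
      exact hG (hfin.subset (fun q hq => not_lt.mpr (hone q hq)))
    have hle : eE ≤ η₀ := csInf_le hbdd hsum
    linarith
  apply hnotsum
  -- Step 2 : f is summable
  choose sfun hsfun using psi_rep ψ hval hle1
  set η₁ := (D + η₀)/2 with hη₁def
  have hη₁D : D < η₁ := by simp only [hη₁def]; linarith
  have hη₁η₀ : η₁ < η₀ := by simp only [hη₁def]; linarith
  have hη₁pos : 0 < η₁ := lt_of_le_of_lt hD0 hη₁D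
  set c := (η₀ - η₁)/2 with hcdef
  have hcpos : 0 < c := by simp only [hcdef]; linarith
  set ε := c / η₁ with hεdef
  have hεpos : 0 < ε := div_pos hcpos hη₁pos
  set V := ((m:ℝ) + n + 1)/η₀ with hVdef
  have hVpos : 0 < V := by
    apply div_pos _ hη₀pos
    positivity
  have hεη₁ : ε * η₁ = c := div_mul_cancel₀ _ (ne_of_gt hη₁pos)
  have hVη : V * η₀ = (m:ℝ) + (n:ℝ) + 1 := div_mul_cancel₀ _ (ne_of_gt hη₀pos)
  clear_value eE D η₀ η₁ c ε V
  set J := ⌈V/ε⌉₊ with hJdef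
  -- formula for f on the support
  have hformula : ∀ q : Fin m → Polynomial F, q ≠ 0 → 0 < ψ q →
      f q = K ^ ((n : ℝ) * (Tdeg q) - ((sfun q : ℝ) + Tdeg q) * η₀) := by
    intro q hq0 hψq
    have hqn : qnorm q = K ^ (Tdeg q) := qnorm_eq_pow hm hq0
    have hψ : ψ q = K ^ (-(sfun q : ℝ)) := hsfun q hψq
    simp only [hfdef]
    rw [hqn, hψ]
    rw [← Real.rpow_natCast K (Tdeg q)]
    rw [← Real.rpow_natCast (K ^ ((Tdeg q : ℕ) : ℝ)) n]
    rw [← Real.rpow_mul (le_of_lt hKpos)]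
    rw [← Real.rpow_sub hKpos]
    rw [← Real.rpow_mul (le_of_lt hKpos)]
    rw [← Real.rpow_add hKpos]
    congr 1
    ring
  -- pointwise bound
  have hfle : ∀ (q : Fin m → Polynomial F), q ≠ 0 → 0 < ψ q → ∀ w : ℝ,
      w * (Tdeg q) ≤ (sfun q : ℝ) →
      f q ≤ K ^ ((Tdeg q : ℝ) * ((n:ℝ) - (1 + w) * η₀)) := by
    intro q hq0 hψq w hw
    rw [hformula q hq0 hψq]
    apply Real.rpow_le_rpow_of_exponent_le (le_of_lt hK1)
    nlinarith [hη₀pos]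
  -- membership in CpsiSet
  have hmem : ∀ (q : Fin m → Polynomial F), q ≠ 0 → 0 < ψ q → ∀ w : ℝ, 0 ≤ w →
      (sfun q : ℝ) ≤ w * Tdeg q →
      q ∈ CpsiSet ψ w (Fintype.card F ^ Tdeg q) := by
    intro q hq0 hψq w hw0 hsw
    have hqn : qnorm q = K ^ (Tdeg q) := qnorm_eq_pow hm hq0
    constructor
    · rw [hqn]; push_cast; exact le_refl _
    · rw [hqn, hsfun q hψq]
      rw [← Real.rpow_natCast K (Tdeg q), ← Real.rpow_mul (le_of_lt hKpos)]
      apply Real.rpow_le_rpow_of_exponent_le (le_of_lt hK1)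
      nlinarith
  -- counting : trivial bound
  have hcnt_triv : ∀ t : ℕ, ∀ u : Finset (Fin m → Polynomial F),
      (∀ q ∈ u, q ≠ 0 ∧ 0 < ψ q ∧ Tdeg q = t) →
      u.card ≤ (Fintype.card F * Fintype.card F ^ t) ^ m := by
    intro t u hu
    have hsub : (u : Set (Fin m → Polynomial F)) ⊆
        {q : Fin m → Polynomial F | qnorm q ≤ ((Fintype.card F ^ t : ℕ) : ℝ)} := by
      intro q hq
      obtain ⟨hq0, _, hqt⟩ := hu q hq
      rw [Set.mem_setOf_eq, qnorm_eq_pow hm hq0, hqt]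
      push_cast
      exact le_refl _
    calc u.card = ((u : Set (Fin m → Polynomial F))).ncard := (Set.ncard_coe_finset u).symm
      _ ≤ ({q : Fin m → Polynomial F | qnorm q ≤ ((Fintype.card F ^ t : ℕ) : ℝ)}).ncard :=
          Set.ncard_le_ncard hsub (finite_qnorm_ball hm _)
      _ ≤ (Fintype.card F * Fintype.card F ^ t) ^ m :=
          ncard_qnorm_ball hm (Nat.one_le_pow _ _ (by have := two_le_card (F := F); omega))
  -- counting via Cpsi
  have hcnt_Cpsi : ∀ w : ℝ, ∀ t : ℕ, ∀ u : Finset (Fin m → Polynomial F),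
      (∀ q ∈ u, q ∈ CpsiSet ψ w (Fintype.card F ^ t)) →
      u.card ≤ Cpsi ψ w (Fintype.card F ^ t) := by
    intro w t u hu
    calc u.card = ((u : Set (Fin m → Polynomial F))).ncard := (Set.ncard_coe_finset u).symm
      _ ≤ (CpsiSet ψ w (Fintype.card F ^ t)).ncard :=
          Set.ncard_le_ncard hu (CpsiSet_finite ψ hm w _)
      _ = Cpsi ψ w (Fintype.card F ^ t) := (Cpsi_eq_ncard ψ w _).symm
  -- the pieces
  set P0 : Set (Fin m → Polynomial F) := {q | q ≠ 0 ∧ 0 < ψ q ∧ Tdeg q = 0} with hP0def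
  set Ph : Set (Fin m → Polynomial F) :=
    {q | q ≠ 0 ∧ 0 < ψ q ∧ 1 ≤ Tdeg q ∧ V * (Tdeg q : ℝ) ≤ (sfun q : ℝ)} with hPhdef
  set Pj : ℕ → Set (Fin m → Polynomial F) := fun j =>
    {q | q ≠ 0 ∧ 0 < ψ q ∧ 1 ≤ Tdeg q ∧ (j:ℝ) * ε * (Tdeg q : ℝ) ≤ (sfun q : ℝ) ∧
      (sfun q : ℝ) ≤ ((j:ℝ)+1) * ε * (Tdeg q : ℝ)} with hPjdef
  set g := fun q => P0.indicator f q + Ph.indicator f q +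
    ∑ j ∈ Finset.range J, (Pj j).indicator f q with hgdef
  -- cover
  have hInn : ∀ (S : Set (Fin m → Polynomial F)) q, 0 ≤ S.indicator f q :=
    fun S q => Set.indicator_nonneg (fun x _ => hfnn x) q
  have hsumnn : ∀ q, 0 ≤ ∑ j ∈ Finset.range J, (Pj j).indicator f q :=
    fun q => Finset.sum_nonneg (fun j _ => hInn (Pj j) q)
  have hcover : ∀ q, f q ≤ g q := by
    intro q
    by_cases hq0 : q = 0
    · have : f q = 0 := by
        simp only [hfdef, hq0, qnorm_zero hm, zero_pow hn.ne',
          zero_mul]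
      rw [this]
      simp only [hgdef]
      have := hInn P0 q; have := hInn Ph q; have := hsumnn q
      linarith
    by_cases hψq : 0 < ψ q
    · -- main case
      have hfq : f q ≤ g q := by
        rcases Nat.eq_zero_or_pos (Tdeg q) with ht0 | ht1
        · have hqP0 : q ∈ P0 := ⟨hq0, hψq, ht0⟩
          have heq : P0.indicator f q = f q := Set.indicator_of_mem hqP0 f
          simp only [hgdef]
          have := hInn Ph q; have := hsumnn q
          linarith
        · rcases le_or_gt (V * (Tdeg q : ℝ)) (sfun q : ℝ) with hhigh | hlow
          · have hqPh : q ∈ Ph := ⟨hq0, hψq, ht1, hhigh⟩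
            have heq : Ph.indicator f q = f q := Set.indicator_of_mem hqPh f
            simp only [hgdef]
            have := hInn P0 q; have := hsumnn q
            linarith
          · have htpos : (0:ℝ) < (Tdeg q : ℝ) := by exact_mod_cast ht1
            have hεt : (0:ℝ) < ε * (Tdeg q : ℝ) := by positivity
            set x := (sfun q : ℝ) / (ε * (Tdeg q : ℝ)) with hxdef
            have hxnn : 0 ≤ x := div_nonneg (Nat.cast_nonneg _) (le_of_lt hεt)
            set j := ⌊x⌋₊ with hjdef2
            have hj1 : (j:ℝ) * ε * (Tdeg q : ℝ) ≤ (sfun q : ℝ) := by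
              have := Nat.floor_le hxnn
              rw [hxdef] at this
              calc (j:ℝ) * ε * (Tdeg q : ℝ) = (j:ℝ) * (ε * (Tdeg q : ℝ)) := by ring
                _ ≤ ((sfun q : ℝ) / (ε * (Tdeg q : ℝ))) * (ε * (Tdeg q : ℝ)) :=
                    mul_le_mul_of_nonneg_right this (le_of_lt hεt)
                _ = (sfun q : ℝ) := by field_simp
            have hj2 : (sfun q : ℝ) ≤ ((j:ℝ)+1) * ε * (Tdeg q : ℝ) := by
              have := Nat.lt_floor_add_one x
              rw [hxdef] at this
              have h2 : (sfun q : ℝ) < ((j:ℝ)+1) * (ε * (Tdeg q : ℝ)) := by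
                have := mul_lt_mul_of_pos_right this hεt
                rwa [div_mul_cancel₀ _ (ne_of_gt hεt)] at this
              calc (sfun q : ℝ) ≤ ((j:ℝ)+1) * (ε * (Tdeg q : ℝ)) := le_of_lt h2
                _ = ((j:ℝ)+1) * ε * (Tdeg q : ℝ) := by ring
            have hjJ : j ∈ Finset.range J := by
              rw [Finset.mem_range]
              have hx : x < V / ε := by
                rw [hxdef, div_lt_div_iff₀ hεt hεpos]
                calc (sfun q : ℝ) * ε < (V * (Tdeg q : ℝ)) * ε :=
                      mul_lt_mul_of_pos_right hlow hεpos
                  _ = V * (ε * (Tdeg q : ℝ)) := by ring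
              have : (j : ℝ) < (J : ℝ) :=
                lt_of_le_of_lt (Nat.floor_le hxnn) (lt_of_lt_of_le hx (Nat.le_ceil _))
              exact_mod_cast this
            have hqPj : q ∈ Pj j := ⟨hq0, hψq, ht1, hj1, hj2⟩
            have heq : (Pj j).indicator f q = f q := Set.indicator_of_mem hqPj f
            have hsingle : (Pj j).indicator f q ≤
                ∑ j' ∈ Finset.range J, (Pj j').indicator f q :=
              Finset.single_le_sum (fun j' _ => hInn (Pj j') q) hjJ
            simp only [hgdef]
            have := hInn P0 q; have := hInn Ph q
            linarith
      exact hfq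
    · have hψ0 : ψ q = 0 := le_antisymm (not_lt.mp hψq) (hnn q)
      have : f q = 0 := by
        simp only [hfdef, hψ0, zero_div,
          Real.zero_rpow (ne_of_gt hη₀pos), mul_zero]
      rw [this]
      simp only [hgdef]
      have := hInn P0 q; have := hInn Ph q; have := hsumnn q
      linarith
  -- summability of pieces
  have hsumP0 : Summable (P0.indicator f) := by
    apply summable_indicator_of_finite
    apply Set.Finite.subset (finite_qnorm_ball hm 1)
    rintro q ⟨hq0, _, hqt⟩
    rw [Set.mem_setOf_eq, qnorm_eq_pow hm hq0, hqt]
    norm_num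
  have hsumPh : Summable (Ph.indicator f) := by
    apply summable_indicator_of_counts hfnn Tdeg
      (b := fun t => K ^ ((t:ℝ) * ((n:ℝ) - (1 + V) * η₀)))
      (cnt := fun t => (Fintype.card F * Fintype.card F ^ t) ^ m)
    · intro t; positivity
    · rintro q ⟨hq0, hψq, ht1, hhigh⟩
      exact hfle q hq0 hψq V hhigh
    · intro t u hu
      refine hcnt_triv t u (fun q hq => ?_)
      obtain ⟨⟨hq0, hψq, ht1, hhigh⟩, hqt⟩ := hu q hq
      exact ⟨hq0, hψq, hqt⟩
    · exact summable_high m n hη₀pos hVη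
  have hsumPj : ∀ j : ℕ, Summable ((Pj j).indicator f) := by
    intro j
    set v := ((j:ℝ)+1) * ε with hvdef
    have hv0 : 0 ≤ v := by positivity
    by_cases htend : Filter.Tendsto (fun N : ℕ => Cpsi ψ v N) Filter.atTop Filter.atTop
    · -- counting case
      have hdelta : deltaPsiV n ψ v ≤ D := by
        rw [hDdef]; exact deltaPsiV_le_deltaPsi ψ n hm hv0
      unfold deltaPsiV at hdelta
      rw [if_pos htend] at hdelta
      have hv1 : (0:ℝ) < v + 1 := by linarith
      have hγ : gammaPsi ψ v < η₁ * (v+1) - n := by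
        rw [div_le_iff₀ hv1] at hdelta
        have h2 : D * (v+1) < η₁ * (v+1) := mul_lt_mul_of_pos_right hη₁D hv1
        linarith
      obtain ⟨N₁, hN₁⟩ := Filter.eventually_atTop.mp (eventually_Cpsi_le ψ hm hγ)
      apply summable_indicator_of_counts hfnn Tdeg
        (b := fun t => K ^ ((t:ℝ) * ((n:ℝ) - (1 + (j:ℝ) * ε) * η₀)))
        (cnt := fun t => Cpsi ψ v (Fintype.card F ^ t))
      · intro t; positivity
      · rintro q ⟨hq0, hψq, ht1, h4, h5⟩
        exact hfle q hq0 hψq ((j:ℝ) * ε) h4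
      · intro t u hu
        apply hcnt_Cpsi v t u
        intro q hq
        obtain ⟨⟨hq0, hψq, ht1, h4, h5⟩, hqt⟩ := hu q hq
        have hmem' := hmem q hq0 hψq v hv0 (by rw [hvdef]; exact h5)
        rwa [hqt] at hmem'
      · have hkey : (η₁ * (v+1) - (n:ℝ)) + ((n:ℝ) - (1 + (j:ℝ) * ε) * η₀) ≤ -c := by
          rw [hvdef]
          exact key_ineq n hcdef hεη₁ hη₁pos hη₁η₀ j
        exact summable_cnt ψ v hcpos (fun N hN => hN₁ N hN) hkey
    · -- finite case
      apply summable_indicator_of_finite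
      apply Set.Finite.subset (Av_finite_of_not_tendsto ψ hm htend)
      rintro q ⟨hq0, hψq, ht1, h4, h5⟩
      exact (hmem q hq0 hψq v hv0 (by rw [hvdef]; exact h5)).2
  have hgsum : Summable g := by
    apply Summable.add (hsumP0.add hsumPh)
    exact summable_sum (fun j _ => hsumPj j)
  exact Summable.of_nonneg_of_le hfnn hcover hgsum

/-- comparison of exponents, `min{δ(ψ), n} ≥ min{η(ψ), n}`. -/
theorem min_eta_le_min_delta {m n : ℕ} (hm : 0 < m) (hn : 0 < n)
    (ψ : (Fin m → Polynomial F) → ℝ)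
    (hval : ∀ q, ψ q = 0 ∨ ∃ r : ℤ, ψ q = (Fintype.card F : ℝ) ^ r)
    (hnn : ∀ q, 0 ≤ ψ q) (hle1 : ∀ q, ψ q ≤ 1)
    (hinfpos : {q : Fin m → Polynomial F | 0 < ψ q}.Infinite) :
    min (etaExp n ψ) (n : ℝ) ≤ min (deltaPsi n ψ) (n : ℝ) := by
  exact eta_delta_aux ψ n hm hn hval hnn hle1 hinfpos

end FFapprox
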